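/- Let q > 0 and let γ, α assign positive real values to finite subsets of ℕ, and let C', C'' > 0 be constants satisfying: (i) for every finite ω ⊆ ℕ, ∑_{ω̂ ⊇ ω} q^{|ω̂|} α(ω̂) ≤ C' q^{|ω|} α(ω); and (ii) for every finite ω ⊆ ℕ, ∑_{ω' ⊆ ω} α(ω')/γ(ω') ≤ C'' α(ω)/γ(ω). Then for every finite ω₀ ⊆ ℕ and every family x of elements of [0,∞] indexed by the finite subsets of ℕ, ∑_{ω ⊇ ω₀} γ(ω)⁻¹ ( ∑_{ω̂ ⊇ ω} q^{(|ω̂|−|ω|)/2} x(ω̂) )² ≤ C' C'' ∑_{ω̂ ⊇ ω₀} γ(ω̂)⁻¹ x(ω̂)², where the outer sums run over all finite supersets of ω₀. -/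

import Mathlib

open scoped ENNReal
open MeasureTheory

lemma tsum_cs {ι : Type*} [Countable ι] (f g : ι → ℝ≥0∞) :
    (∑' i, f i * g i) ^ 2 ≤ (∑' i, f i ^ 2) * ∑' i, g i ^ 2 := by
  letI : MeasurableSpace ι := ⊤
  haveI : MeasurableSingletonClass ι := ⟨fun _ => trivial⟩
  have hpq : (2 : ℝ).HolderConjugate 2 := Real.HolderConjugate.two_two
  have h := ENNReal.lintegral_mul_le_Lp_mul_Lq (Measure.count : Measure ι) hpq
      (measurable_from_top (f := f)).aemeasurable (measurable_from_top (f := g)).aemeasurable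
  simp only [lintegral_count] at h
  have h2 : (∑' i, f i * g i) ^ 2 ≤
      ((∑' i, f i ^ (2:ℝ)) ^ ((2:ℝ)⁻¹) * (∑' i, g i ^ (2:ℝ)) ^ ((2:ℝ)⁻¹)) ^ 2 := by
    apply pow_le_pow_left' ?_ 2
    convert h using 3 <;> norm_num <;> rfl
  refine h2.trans_eq ?_
  rw [mul_pow, ← ENNReal.rpow_natCast (_ ^ _) 2, ← ENNReal.rpow_natCast (_ ^ _) 2,
    ← ENNReal.rpow_mul, ← ENNReal.rpow_mul]
  norm_num

lemma stepA (q : ℝ) (hq : 0 < q) (α : Finset ℕ → ℝ) (hα : ∀ ω, 0 < α ω)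
    (C' : ℝ) (hC' : 0 < C')
    (h1 : ∀ ω : Finset ℕ,
      ∑' σ : {σ : Finset ℕ // ω ⊆ σ},
          ENNReal.ofReal (q ^ (σ : Finset ℕ).card * α (σ : Finset ℕ)) ≤
        ENNReal.ofReal (C' * q ^ ω.card * α ω))
    (ω : Finset ℕ) (x : Finset ℕ → ℝ≥0∞) :
    (∑' σ : {σ : Finset ℕ // ω ⊆ σ},
        ENNReal.ofReal (q ^ ((((σ : Finset ℕ).card : ℝ) - (ω.card : ℝ)) / 2)) *
          x (σ : Finset ℕ)) ^ 2 ≤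
      ENNReal.ofReal C' *
        ∑' σ : {σ : Finset ℕ // ω ⊆ σ},
          ENNReal.ofReal (α ω / α (σ : Finset ℕ)) * x (σ : Finset ℕ) ^ 2 := by
  set f : {σ : Finset ℕ // ω ⊆ σ} → ℝ≥0∞ := fun σ =>
    ENNReal.ofReal
      (Real.sqrt (q ^ ((((σ : Finset ℕ).card : ℝ) - (ω.card : ℝ))) *
        (α (σ : Finset ℕ) / α ω))) with hf
  set g : {σ : Finset ℕ // ω ⊆ σ} → ℝ≥0∞ := fun σ =>
    ENNReal.ofReal (Real.sqrt (α ω / α (σ : Finset ℕ))) * x (σ : Finset ℕ) with hg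
  have hfg : ∀ σ : {σ : Finset ℕ // ω ⊆ σ},
      ENNReal.ofReal (q ^ ((((σ : Finset ℕ).card : ℝ) - (ω.card : ℝ)) / 2)) *
        x (σ : Finset ℕ) = f σ * g σ := by
    intro σ
    rw [hf, hg]
    dsimp only
    rw [← mul_assoc, ← ENNReal.ofReal_mul (Real.sqrt_nonneg _), ← Real.sqrt_mul
      (mul_nonneg (Real.rpow_pos_of_pos hq _).le (div_nonneg (hα _).le (hα _).le))]
    congr 2
    have hαω := (hα ω).ne'
    have hασ := (hα (σ : Finset ℕ)).ne'
    have : q ^ ((((σ : Finset ℕ).card : ℝ) - (ω.card : ℝ))) * (α (σ : Finset ℕ) / α ω) *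
        (α ω / α (σ : Finset ℕ)) = q ^ ((((σ : Finset ℕ).card : ℝ) - (ω.card : ℝ))) := by
      field_simp
    rw [this, Real.sqrt_eq_rpow, ← Real.rpow_mul hq.le, mul_one_div]
  have hD0 : ENNReal.ofReal (q ^ ω.card * α ω) ≠ 0 :=
    (ENNReal.ofReal_pos.mpr (mul_pos (pow_pos hq _) (hα ω))).ne'
  have hDt : ENNReal.ofReal (q ^ ω.card * α ω) ≠ ⊤ := ENNReal.ofReal_ne_top
  have hgsq : ∀ σ : {σ : Finset ℕ // ω ⊆ σ},
      g σ ^ 2 = ENNReal.ofReal (α ω / α (σ : Finset ℕ)) * x (σ : Finset ℕ) ^ 2 := by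
    intro σ
    rw [hg]
    dsimp only
    rw [mul_pow, ← ENNReal.ofReal_pow (Real.sqrt_nonneg _), sq,
      Real.mul_self_sqrt (div_nonneg (hα _).le (hα _).le)]
  have hkey : ∀ σ : {σ : Finset ℕ // ω ⊆ σ},
      f σ ^ 2 = ENNReal.ofReal (q ^ (σ : Finset ℕ).card * α (σ : Finset ℕ)) /
        ENNReal.ofReal (q ^ ω.card * α ω) := by
    intro σ
    rw [hf]
    dsimp only
    rw [← ENNReal.ofReal_pow (Real.sqrt_nonneg _), sq,
      Real.mul_self_sqrt (mul_nonneg (Real.rpow_pos_of_pos hq _).le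
        (div_nonneg (hα _).le (hα _).le)),
      ← ENNReal.ofReal_div_of_pos (mul_pos (pow_pos hq _) (hα ω))]
    congr 1
    rw [Real.rpow_sub hq, Real.rpow_natCast, Real.rpow_natCast, div_mul_div_comm]
  have hfsum : ∑' σ : {σ : Finset ℕ // ω ⊆ σ}, f σ ^ 2 ≤ ENNReal.ofReal C' := by
    calc ∑' σ : {σ : Finset ℕ // ω ⊆ σ}, f σ ^ 2
        = (∑' σ : {σ : Finset ℕ // ω ⊆ σ},
            ENNReal.ofReal (q ^ (σ : Finset ℕ).card * α (σ : Finset ℕ))) *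
            (ENNReal.ofReal (q ^ ω.card * α ω))⁻¹ := by
          rw [← ENNReal.tsum_mul_right]
          exact tsum_congr fun σ => by rw [hkey σ, div_eq_mul_inv]
      _ ≤ ENNReal.ofReal (C' * q ^ ω.card * α ω) *
            (ENNReal.ofReal (q ^ ω.card * α ω))⁻¹ := mul_le_mul_left (h1 ω) _
      _ = ENNReal.ofReal C' := by
          rw [mul_assoc, ENNReal.ofReal_mul hC'.le, mul_assoc,
            ENNReal.mul_inv_cancel hD0 hDt, mul_one]
  calc (∑' σ : {σ : Finset ℕ // ω ⊆ σ},
        ENNReal.ofReal (q ^ ((((σ : Finset ℕ).card : ℝ) - (ω.card : ℝ)) / 2)) *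
          x (σ : Finset ℕ)) ^ 2
      = (∑' σ : {σ : Finset ℕ // ω ⊆ σ}, f σ * g σ) ^ 2 := by
        rw [tsum_congr hfg]
    _ ≤ (∑' σ : {σ : Finset ℕ // ω ⊆ σ}, f σ ^ 2) *
          ∑' σ : {σ : Finset ℕ // ω ⊆ σ}, g σ ^ 2 := tsum_cs f g
    _ ≤ ENNReal.ofReal C' *
          ∑' σ : {σ : Finset ℕ // ω ⊆ σ},
            ENNReal.ofReal (α ω / α (σ : Finset ℕ)) * x (σ : Finset ℕ) ^ 2 := by
        rw [tsum_congr hgsq]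
        exact mul_le_mul_left hfsum _


/-- restricted-sum version of the core estimate, used for Corollary 2.
Under the same hypotheses on `q, γ, α, C', C''` as in the proof of Proposition 5, for every
finite `ω₀ ⊆ ℕ` and every `[0,∞]`-valued family `x` indexed by finite subsets of `ℕ`,
`∑_{ω ⊇ ω₀} γ(ω)⁻¹ (∑_{ω̂ ⊇ ω} q^{(|ω̂|-|ω|)/2} x(ω̂))² ≤ C' C'' ∑_{ω̂ ⊇ ω₀} γ(ω̂)⁻¹ x(ω̂)²`. -/
theorem stmt14 (q : ℝ) (hq : 0 < q) (γ α : Finset ℕ → ℝ)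
    (hγ : ∀ ω, 0 < γ ω) (hα : ∀ ω, 0 < α ω)
    (C' C'' : ℝ) (hC' : 0 < C') (hC'' : 0 < C'')
    (h1 : ∀ ω : Finset ℕ,
      ∑' σ : {σ : Finset ℕ // ω ⊆ σ},
          ENNReal.ofReal (q ^ (σ : Finset ℕ).card * α (σ : Finset ℕ)) ≤
        ENNReal.ofReal (C' * q ^ ω.card * α ω))
    (h2 : ∀ ω : Finset ℕ,
      ∑ ω' ∈ ω.powerset, α ω' / γ ω' ≤ C'' * α ω / γ ω) :
    ∀ (ω₀ : Finset ℕ) (x : Finset ℕ → ℝ≥0∞),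
      ∑' ω : {ω : Finset ℕ // ω₀ ⊆ ω}, ENNReal.ofReal ((γ (ω : Finset ℕ))⁻¹) *
          (∑' σ : {σ : Finset ℕ // (ω : Finset ℕ) ⊆ σ},
            ENNReal.ofReal
                (q ^ ((((σ : Finset ℕ).card : ℝ) - ((ω : Finset ℕ).card : ℝ)) / 2)) *
              x (σ : Finset ℕ)) ^ 2 ≤
        ENNReal.ofReal (C' * C'') *
          ∑' σ : {σ : Finset ℕ // ω₀ ⊆ σ},
            ENNReal.ofReal ((γ (σ : Finset ℕ))⁻¹) * x (σ : Finset ℕ) ^ 2 := by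
  intro ω₀ x
  set F : Finset ℕ → Finset ℕ → ℝ≥0∞ := fun ω σ =>
    ENNReal.ofReal ((γ ω)⁻¹ * (α ω / α σ)) * x σ ^ 2 with hF
  set G : Finset ℕ → Finset ℕ → ℝ≥0∞ := fun ω σ =>
    if ω₀ ⊆ ω ∧ ω ⊆ σ then F ω σ else 0 with hG
  have step1 :
      ∑' ω : {ω : Finset ℕ // ω₀ ⊆ ω}, ENNReal.ofReal ((γ (ω : Finset ℕ))⁻¹) *
          (∑' σ : {σ : Finset ℕ // (ω : Finset ℕ) ⊆ σ},
            ENNReal.ofReal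
                (q ^ ((((σ : Finset ℕ).card : ℝ) - ((ω : Finset ℕ).card : ℝ)) / 2)) *
              x (σ : Finset ℕ)) ^ 2 ≤
        ENNReal.ofReal C' *
          ∑' ω : {ω : Finset ℕ // ω₀ ⊆ ω},
            ∑' σ : {σ : Finset ℕ // (ω : Finset ℕ) ⊆ σ}, F (ω : Finset ℕ) (σ : Finset ℕ) := by
    rw [← ENNReal.tsum_mul_left]
    refine ENNReal.summable.tsum_le_tsum (fun ω => ?_) ENNReal.summable
    calc ENNReal.ofReal ((γ (ω : Finset ℕ))⁻¹) *
          (∑' σ : {σ : Finset ℕ // (ω : Finset ℕ) ⊆ σ},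
            ENNReal.ofReal
                (q ^ ((((σ : Finset ℕ).card : ℝ) - ((ω : Finset ℕ).card : ℝ)) / 2)) *
              x (σ : Finset ℕ)) ^ 2
        ≤ ENNReal.ofReal ((γ (ω : Finset ℕ))⁻¹) *
            (ENNReal.ofReal C' *
              ∑' σ : {σ : Finset ℕ // (ω : Finset ℕ) ⊆ σ},
                ENNReal.ofReal (α (ω : Finset ℕ) / α (σ : Finset ℕ)) * x (σ : Finset ℕ) ^ 2) :=
          mul_le_mul_right (stepA q hq α hα C' hC' h1 (ω : Finset ℕ) x) _
      _ = ENNReal.ofReal C' *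
            ∑' σ : {σ : Finset ℕ // (ω : Finset ℕ) ⊆ σ}, F (ω : Finset ℕ) (σ : Finset ℕ) := by
          rw [← mul_assoc, mul_comm (ENNReal.ofReal ((γ (ω : Finset ℕ))⁻¹)) (ENNReal.ofReal C'),
            mul_assoc, ← ENNReal.tsum_mul_left]
          congr 1
          refine tsum_congr fun σ => ?_
          rw [hF]
          dsimp only
          rw [← mul_assoc, ← ENNReal.ofReal_mul (inv_nonneg.mpr (hγ _).le)]
  have e1 : ∀ ω : Finset ℕ,
      (∑' σ : {σ : Finset ℕ // ω ⊆ σ}, F ω (σ : Finset ℕ)) =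
        ∑' σ : Finset ℕ, if ω ⊆ σ then F ω σ else 0 := by
    intro ω
    refine Eq.trans (tsum_subtype {σ : Finset ℕ | ω ⊆ σ} (F ω)) ?_
    exact tsum_congr fun σ => by simp [Set.indicator_apply]
  have step2 :
      (∑' ω : {ω : Finset ℕ // ω₀ ⊆ ω},
        ∑' σ : {σ : Finset ℕ // (ω : Finset ℕ) ⊆ σ}, F (ω : Finset ℕ) (σ : Finset ℕ)) =
      ∑' σ : Finset ℕ, ∑' ω : Finset ℕ, G ω σ := by
    refine Eq.trans (tsum_subtype {ω : Finset ℕ | ω₀ ⊆ ω}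
      (fun ω => ∑' σ : {σ : Finset ℕ // ω ⊆ σ}, F ω (σ : Finset ℕ))) ?_
    rw [← ENNReal.tsum_comm]
    refine tsum_congr fun ω => ?_
    rw [Set.indicator_apply]
    simp only [Set.mem_setOf_eq]
    by_cases h : ω₀ ⊆ ω
    · rw [if_pos h, e1 ω]
      refine tsum_congr fun σ => ?_
      rw [hG]
      dsimp only
      by_cases h' : ω ⊆ σ
      · rw [if_pos h', if_pos ⟨h, h'⟩]
      · rw [if_neg h', if_neg (by tauto)]
    · rw [if_neg h]
      symm
      refine ENNReal.summable.tsum_eq_zero_iff |>.mpr fun σ => ?_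
      rw [hG]
      dsimp only
      rw [if_neg (by tauto)]
  have step3 : ∀ σ : Finset ℕ, (∑' ω : Finset ℕ, G ω σ) ≤
      if ω₀ ⊆ σ then ENNReal.ofReal C'' * (ENNReal.ofReal ((γ σ)⁻¹) * x σ ^ 2) else 0 := by
    intro σ
    by_cases h : ω₀ ⊆ σ
    · rw [if_pos h]
      rw [tsum_eq_sum (s := σ.powerset) (fun ω hω => by
        rw [hG]; dsimp only
        rw [if_neg (fun hc => hω (Finset.mem_powerset.mpr hc.2))])]
      calc ∑ ω ∈ σ.powerset, G ω σ
          ≤ ∑ ω ∈ σ.powerset, ENNReal.ofReal (α ω / γ ω / α σ) * x σ ^ 2 := by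
            refine Finset.sum_le_sum fun ω _ => ?_
            rw [hG, hF]
            dsimp only
            split_ifs with hcond
            · refine le_of_eq ?_
              congr 2
              field_simp
            · exact zero_le
        _ = ENNReal.ofReal ((∑ ω ∈ σ.powerset, α ω / γ ω) / α σ) * x σ ^ 2 := by
            rw [← Finset.sum_mul, ← ENNReal.ofReal_sum_of_nonneg
              (fun ω _ => div_nonneg (div_nonneg (hα _).le (hγ _).le) (hα _).le),
              Finset.sum_div]
        _ ≤ ENNReal.ofReal ((C'' * α σ / γ σ) / α σ) * x σ ^ 2 := by
            refine mul_le_mul_left (ENNReal.ofReal_le_ofReal ?_) _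
            exact div_le_div_of_nonneg_right (h2 σ) (hα σ).le
        _ = ENNReal.ofReal C'' * (ENNReal.ofReal ((γ σ)⁻¹) * x σ ^ 2) := by
            rw [← mul_assoc, ← ENNReal.ofReal_mul hC''.le]
            congr 2
            rw [div_div, mul_comm (γ σ) (α σ), ← div_div, mul_div_assoc,
              div_self (hα σ).ne', mul_one, div_eq_mul_inv]
    · rw [if_neg h]
      refine le_of_eq (ENNReal.summable.tsum_eq_zero_iff |>.mpr fun ω => ?_)
      rw [hG]
      dsimp only
      rw [if_neg (fun hc => h (hc.1.trans hc.2))]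
  have step4 :
      (∑' σ : Finset ℕ,
        if ω₀ ⊆ σ then ENNReal.ofReal C'' * (ENNReal.ofReal ((γ σ)⁻¹) * x σ ^ 2) else 0) =
      ENNReal.ofReal C'' *
        ∑' σ : {σ : Finset ℕ // ω₀ ⊆ σ},
          ENNReal.ofReal ((γ (σ : Finset ℕ))⁻¹) * x (σ : Finset ℕ) ^ 2 := by
    rw [← ENNReal.tsum_mul_left]
    refine Eq.trans ?_ (tsum_subtype {σ : Finset ℕ | ω₀ ⊆ σ}
        (fun σ => ENNReal.ofReal C'' * (ENNReal.ofReal ((γ σ)⁻¹) * x σ ^ 2))).symm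
    exact tsum_congr fun σ => by simp [Set.indicator_apply]
  calc _ ≤ ENNReal.ofReal C' *
        ∑' ω : {ω : Finset ℕ // ω₀ ⊆ ω},
          ∑' σ : {σ : Finset ℕ // (ω : Finset ℕ) ⊆ σ}, F (ω : Finset ℕ) (σ : Finset ℕ) := step1
    _ = ENNReal.ofReal C' * ∑' σ : Finset ℕ, ∑' ω : Finset ℕ, G ω σ := by rw [step2]
    _ ≤ ENNReal.ofReal C' * ∑' σ : Finset ℕ,
          (if ω₀ ⊆ σ then ENNReal.ofReal C'' * (ENNReal.ofReal ((γ σ)⁻¹) * x σ ^ 2) else 0) :=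
        mul_le_mul_right (ENNReal.summable.tsum_le_tsum step3 ENNReal.summable) _
    _ = ENNReal.ofReal (C' * C'') *
          ∑' σ : {σ : Finset ℕ // ω₀ ⊆ σ},
            ENNReal.ofReal ((γ (σ : Finset ℕ))⁻¹) * x (σ : Finset ℕ) ^ 2 := by
        rw [step4, ← mul_assoc, ← ENNReal.ofReal_mul hC'.le]
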